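/- arXiv:2109.08946 — 3 statements merged into one kernel-verified Lean document; each statement's English description precedes it below -/
import Mathlib

section
/- Let 𝔤 be a compact Lie algebra, 𝔨 a subalgebra normalized by a Cartan subalgebra of 𝔤 (a regular subalgebra). Fix an ad-invariant inner product Q on 𝔤, let n = n_𝔤(𝔨) be the normalizer of 𝔨 and 𝔭 the Q-orthogonal complement of n in 𝔤. Then no non-zero ad_n-submodule of 𝔨 is ad_n-equivariantly isomorphic to any non-zero ad_n-submodule of 𝔭. -/
set_option linter.unusedSectionVars false
namespace Stmt6Aux
noncomputable section
variable {L : Type*} [AddCommGroup L] [Module ℝ L]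

instance : SMul ℂ (L × L) :=
  ⟨fun z p => (z.re • p.1 - z.im • p.2, z.im • p.1 + z.re • p.2)⟩

lemma csmul_def (z : ℂ) (p : L × L) :
    z • p = (z.re • p.1 - z.im • p.2, z.im • p.1 + z.re • p.2) := rfl

lemma csmul_fst (z : ℂ) (p : L × L) : (z • p).1 = z.re • p.1 - z.im • p.2 := rfl
lemma csmul_snd (z : ℂ) (p : L × L) : (z • p).2 = z.im • p.1 + z.re • p.2 := rfl

instance : Module ℂ (L × L) where
  one_smul p := by simp [csmul_def]
  mul_smul z w p := by
    simp only [csmul_def, Complex.mul_re, Complex.mul_im]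
    exact Prod.ext (by module) (by module)
  smul_zero z := by simp [csmul_def]
  smul_add z p q := by
    simp only [csmul_def, Prod.fst_add, Prod.snd_add, Prod.mk_add_mk]
    exact Prod.ext (by module) (by module)
  add_smul z w p := by
    simp only [csmul_def, Complex.add_re, Complex.add_im, Prod.mk_add_mk]
    exact Prod.ext (by module) (by module)
  zero_smul p := by simp [csmul_def]

instance : IsScalarTower ℝ ℂ (L × L) where
  smul_assoc r z p := by
    simp only [csmul_def, Complex.real_smul, Complex.mul_re, Complex.mul_im,
      Complex.ofReal_re, Complex.ofReal_im, Prod.smul_fst, Prod.smul_snd, Prod.smul_mk]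
    exact Prod.ext (by module) (by module)

instance [FiniteDimensional ℝ L] : FiniteDimensional ℂ (L × L) :=
  Module.Finite.of_restrictScalars_finite ℝ ℂ (L × L)

end

section LieStuff
variable {L : Type*} [LieRing L] [LieAlgebra ℝ L]

/-- bracket on the complexification -/
def br (p q : L × L) : L × L :=
  (⁅p.1, q.1⁆ - ⁅p.2, q.2⁆, ⁅p.1, q.2⁆ + ⁅p.2, q.1⁆)

lemma lie_swap (a b : L) : ⁅a, b⁆ = -⁅b, a⁆ := (lie_skew a b).symm

lemma br_add_right (p q r : L × L) : br p (q + r) = br p q + br p r := by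
  simp only [br, Prod.fst_add, Prod.snd_add, lie_add, Prod.mk_add_mk]
  exact Prod.ext (by abel) (by abel)

lemma br_smul_right (p : L × L) (z : ℂ) (q : L × L) : br p (z • q) = z • br p q := by
  simp only [br, csmul_def, lie_smul, lie_add, lie_sub]
  exact Prod.ext (by module) (by module)

lemma br_smul_left (p : L × L) (z : ℂ) (q : L × L) : br (z • p) q = z • br p q := by
  simp only [br, csmul_def, smul_lie, add_lie, sub_lie]
  exact Prod.ext (by module) (by module)

lemma br_antisymm (p q : L × L) : br p q = -br q p := by
  simp only [br, Prod.neg_mk, Prod.mk.injEq]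
  constructor
  · rw [lie_swap p.1 q.1, lie_swap p.2 q.2]; abel
  · rw [lie_swap p.1 q.2, lie_swap p.2 q.1]; abel

lemma br_jacobi (p q r : L × L) : br p (br q r) = br (br p q) r + br q (br p r) := by
  simp only [br, lie_add, add_lie, lie_sub, sub_lie, lie_lie, Prod.mk_add_mk]
  exact Prod.ext (by abel) (by abel)

lemma br_zero_right (p : L × L) : br p 0 = 0 := by
  simp [br]

lemma br_neg_left (p q : L × L) : br (-p) q = -br p q := by
  simp only [br, Prod.fst_neg, Prod.snd_neg, neg_lie, Prod.neg_mk]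
  exact Prod.ext (by abel) (by abel)

/-- conjugation -/
def cj (p : L × L) : L × L := (p.1, -p.2)

lemma cj_br (p q : L × L) : cj (br p q) = br (cj p) (cj q) := by
  simp only [cj, br, lie_neg, neg_lie, neg_neg]
  exact Prod.ext (by abel) (by abel)

lemma cj_smul (z : ℂ) (p : L × L) : cj (z • p) = (starRingEnd ℂ) z • cj p := by
  simp only [cj, csmul_def, Complex.conj_re, Complex.conj_im, smul_neg, neg_add, neg_neg, neg_smul]

/-- ad as a complex-linear endomorphism -/
def adE (p : L × L) : Module.End ℂ (L × L) where
  toFun := br p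
  map_add' := br_add_right p
  map_smul' z q := br_smul_right p z q

lemma adE_apply (p q : L × L) : adE p q = br p q := rfl

variable (Q : L →ₗ[ℝ] L →ₗ[ℝ] ℝ)

/-- complex bilinear extension of Q -/
def Qc (p q : L × L) : ℂ :=
  ⟨Q p.1 q.1 - Q p.2 q.2, Q p.1 q.2 + Q p.2 q.1⟩

lemma Qc_re (p q : L × L) : (Qc Q p q).re = Q p.1 q.1 - Q p.2 q.2 := rfl
lemma Qc_im (p q : L × L) : (Qc Q p q).im = Q p.1 q.2 + Q p.2 q.1 := rfl

lemma Qc_smul_right (p : L × L) (z : ℂ) (q : L × L) : Qc Q p (z • q) = z * Qc Q p q := by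
  simp only [Qc, csmul_def, map_sub, map_add, map_smul, LinearMap.sub_apply, LinearMap.add_apply,
    LinearMap.smul_apply, smul_eq_mul, Complex.ext_iff, Complex.mul_re, Complex.mul_im]
  constructor <;> ring

lemma Qc_invariant (hQad : ∀ X Y Z : L, Q ⁅X, Y⁆ Z = -(Q Y ⁅X, Z⁆))
    (a b c : L × L) : Qc Q (br a b) c = -Qc Q b (br a c) := by
  simp only [Qc, br, map_sub, map_add, LinearMap.sub_apply, LinearMap.add_apply,
    Complex.ext_iff, Complex.neg_re, Complex.neg_im, hQad]
  constructor <;> ring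

lemma Qc_cj_self (hQsymm : ∀ x y : L, Q x y = Q y x) (p : L × L) :
    Qc Q (cj p) p = ((Q p.1 p.1 + Q p.2 p.2 : ℝ) : ℂ) := by
  simp only [Qc, cj, map_neg, LinearMap.neg_apply, Complex.ext_iff, Complex.ofReal_re,
    Complex.ofReal_im, hQsymm p.2 p.1]
  constructor <;> ring

end LieStuff
open Module

lemma exists_common_eigenvector {K V ι : Type*} [Field K] [IsAlgClosed K] [AddCommGroup V]
    [Module K V] [FiniteDimensional K V] (F : ι → Module.End K V)
    (hcomm : ∀ i j, (F i) ∘ₗ (F j) = (F j) ∘ₗ (F i)) :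
    ∀ (n : ℕ) (W : Submodule K V), Module.finrank K W = n → W ≠ ⊥ →
      (∀ i, ∀ w ∈ W, F i w ∈ W) →
      ∃ v ∈ W, v ≠ 0 ∧ ∀ i, ∃ c : K, F i v = c • v := by
  intro n
  induction n using Nat.strong_induction_on with
  | _ n ih =>
    intro W hrank hW hinv
    classical
    by_cases h : ∀ i, ∃ c : K, ∀ w ∈ W, F i w = c • w
    · obtain ⟨v, hvW, hv0⟩ := Submodule.exists_mem_ne_zero_of_ne_bot hW
      exact ⟨v, hvW, hv0, fun i => (h i).imp fun c hc => hc v hvW⟩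
    · push_neg at h
      obtain ⟨i, hi⟩ := h
      haveI : Nontrivial W := Submodule.nontrivial_iff_ne_bot.mpr hW
      obtain ⟨c, hc⟩ := Module.End.exists_eigenvalue ((F i).restrict (hinv i))
      obtain ⟨w, hw⟩ := hc.exists_hasEigenvector
      set W' : Submodule K V := W ⊓ LinearMap.ker (F i - c • LinearMap.id) with hW'def
      have hmemW' : ∀ x : V, x ∈ W' ↔ x ∈ W ∧ F i x = c • x := by
        intro x
        simp only [hW'def, Submodule.mem_inf, LinearMap.mem_ker, LinearMap.sub_apply,
          LinearMap.smul_apply, LinearMap.id_apply, sub_eq_zero]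
      have hwW' : (w : V) ∈ W' := by
        rw [hmemW']
        refine ⟨w.2, ?_⟩
        have := congrArg (Subtype.val) hw.apply_eq_smul
        simpa [LinearMap.restrict_coe_apply] using this
      have hW'ne : W' ≠ ⊥ := by
        intro hbot
        have : (w : V) = 0 := by rw [hbot] at hwW'; simpa using hwW'
        exact hw.right (Subtype.coe_injective (by simpa using this))
      have hW'lt : W' < W := by
        obtain ⟨w₀, hw₀W, hw₀⟩ := hi c
        refine lt_of_le_of_ne inf_le_left ?_
        intro he
        have : w₀ ∈ W' := he ▸ hw₀W
        exact hw₀ ((hmemW' w₀).mp this).2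
      have hinv' : ∀ j, ∀ x ∈ W', F j x ∈ W' := by
        intro j x hx
        rw [hmemW'] at hx ⊢
        refine ⟨hinv j x hx.1, ?_⟩
        have hcm := congrFun (congrArg DFunLike.coe (hcomm i j)) x
        simp only [LinearMap.comp_apply] at hcm
        rw [hcm, hx.2, map_smul]
      have hlt : Module.finrank K W' < n := by
        rw [← hrank]
        exact Submodule.finrank_lt_finrank_of_lt hW'lt
      obtain ⟨v, hvW', hv⟩ := ih _ hlt W' rfl hW'ne hinv'
      exact ⟨v, ((hmemW' v).mp hvW').1, hv⟩
end Stmt6Aux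

open Stmt6Aux



/-- Key lemma on regular subalgebras: if `𝔨` is a regular subalgebra of a compact Lie
algebra `𝔤` (normalized by a Cartan, i.e. maximal abelian, subalgebra `𝔱` of `𝔤`),
`n = n_𝔤(𝔨)` its normalizer and `𝔭` the `Q`-orthogonal complement of `n`, then no
non-zero `ad_n`-submodule of `𝔨` is `ad_n`-equivariantly isomorphic to a non-zero
`ad_n`-submodule of `𝔭`. -/
theorem stmt6 {L : Type*} [LieRing L] [LieAlgebra ℝ L] [FiniteDimensional ℝ L]
    (Q : L →ₗ[ℝ] L →ₗ[ℝ] ℝ)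
    (hQsymm : ∀ x y : L, Q x y = Q y x)
    (hQpos : ∀ x : L, x ≠ 0 → 0 < Q x x)
    (hQad : ∀ X Y Z : L, Q ⁅X, Y⁆ Z = -(Q Y ⁅X, Z⁆))
    (𝔨 𝔱 : LieSubalgebra ℝ L)
    -- 𝔱 is a Cartan (maximal abelian) subalgebra of 𝔤
    (htab : ∀ X ∈ 𝔱, ∀ Y ∈ 𝔱, ⁅X, Y⁆ = 0)
    (htmax : ∀ 𝔱' : LieSubalgebra ℝ L, (∀ X ∈ 𝔱', ∀ Y ∈ 𝔱', ⁅X, Y⁆ = 0) → 𝔱 ≤ 𝔱' → 𝔱' = 𝔱)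
    -- 𝔨 is regular: 𝔱 normalizes 𝔨
    (hreg : ∀ H ∈ 𝔱, ∀ X ∈ 𝔨, ⁅H, X⁆ ∈ 𝔨)
    (𝔭 : Submodule ℝ L)
    -- 𝔭 is the Q-orthogonal complement of the normalizer n_𝔤(𝔨)
    (h𝔭 : ∀ X : L, X ∈ 𝔭 ↔ ∀ Y ∈ 𝔨.normalizer, Q X Y = 0) :
    ∀ U₁ U₂ : Submodule ℝ L, U₁ ≤ 𝔨.toSubmodule → U₂ ≤ 𝔭 → U₁ ≠ ⊥ → U₂ ≠ ⊥ →
      (∀ X ∈ 𝔨.normalizer, ∀ u ∈ U₁, ⁅X, u⁆ ∈ U₁) →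
      (∀ X ∈ 𝔨.normalizer, ∀ u ∈ U₂, ⁅X, u⁆ ∈ U₂) →
      ¬ ∃ φ : L →ₗ[ℝ] L, Submodule.map φ U₁ = U₂ ∧ (∀ x ∈ U₁, φ x = 0 → x = 0) ∧
        (∀ X ∈ 𝔨.normalizer, ∀ u ∈ U₁, φ ⁅X, u⁆ = ⁅X, φ u⁆) := by
  intro U₁ U₂ hU₁k hU₂p hU₁ne hU₂ne hU₁inv hU₂inv
  rintro ⟨φ, hmap, hinj, hequiv⟩
  classical
  -- basic positivity facts
  have hQnn : ∀ x : L, 0 ≤ Q x x := by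
    intro x
    by_cases hx : x = 0
    · simp [hx]
    · exact (hQpos x hx).le
  have hQz : ∀ x : L, Q x x = 0 → x = 0 := by
    intro x hx
    by_contra hc
    exact absurd hx (ne_of_gt (hQpos x hc))
  have htn : ∀ H ∈ 𝔱, H ∈ 𝔨.normalizer := by
    intro H hH
    exact (𝔨.mem_normalizer_iff H).mpr fun y hy => hreg H hH y hy
  have hkn : ∀ x ∈ 𝔨, x ∈ 𝔨.normalizer := fun x hx => 𝔨.le_normalizer hx
  -- the centralizer of 𝔱 is 𝔱
  have hcent : ∀ X : L, (∀ H ∈ 𝔱, ⁅H, X⁆ = 0) → X ∈ 𝔱 := by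
    intro X hX
    set S : Submodule ℝ L := 𝔱.toSubmodule ⊔ Submodule.span ℝ {X} with hS
    have habS : ∀ a ∈ S, ∀ b ∈ S, ⁅a, b⁆ = 0 := by
      intro a ha b hb
      rw [hS, Submodule.mem_sup] at ha hb
      obtain ⟨t, ht, s, hs, rfl⟩ := ha
      obtain ⟨t', ht', s', hs', rfl⟩ := hb
      obtain ⟨r, rfl⟩ := Submodule.mem_span_singleton.mp hs
      obtain ⟨r', rfl⟩ := Submodule.mem_span_singleton.mp hs'
      have h1 : ⁅t, t'⁆ = 0 := htab t ht t' ht'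
      have h2 : ⁅t, X⁆ = 0 := hX t ht
      have h3 : ⁅X, t'⁆ = 0 := by rw [lie_swap, hX t' ht', neg_zero]
      simp [lie_add, add_lie, lie_smul, smul_lie, h1, h2, h3]
    have hlie : ∀ {x y : L}, x ∈ S → y ∈ S → ⁅x, y⁆ ∈ S := by
      intro x y hx hy
      have hz : ⁅x, y⁆ = (0 : L) := habS x hx y hy
      rw [hz]
      exact S.zero_mem
    let T' : LieSubalgebra ℝ L := { S with lie_mem' := hlie }
    have hT'mem : ∀ x : L, x ∈ T' ↔ x ∈ S := fun x => Iff.rfl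
    have habT' : ∀ a ∈ T', ∀ b ∈ T', ⁅a, b⁆ = 0 := fun a ha b hb =>
      habS a ((hT'mem a).mp ha) b ((hT'mem b).mp hb)
    have hle : 𝔱 ≤ T' := fun x hx => (hT'mem x).mpr (Submodule.mem_sup_left hx)
    have hXT' : X ∈ T' :=
      (hT'mem X).mpr (Submodule.mem_sup_right (Submodule.mem_span_singleton_self X))
    rw [htmax T' habT' hle] at hXT'
    exact hXT'
  -- componentwise description of br (H, 0)
  have hbr0 : ∀ (H : L) (p : L × L), br ((H : L), (0:L)) p = (⁅H, p.1⁆, ⁅H, p.2⁆) := by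
    intro H p; simp [br]
  -- the commuting family indexed by 𝔱
  set F : 𝔱 → Module.End ℂ (L × L) := fun i => adE ((i : L), (0:L)) with hF
  have hcomm : ∀ i j, (F i) ∘ₗ (F j) = (F j) ∘ₗ (F i) := by
    intro i j
    apply LinearMap.ext
    intro q
    have hij : ⁅(i : L), (j : L)⁆ = 0 := htab _ i.2 _ j.2
    have hcc : ∀ x : L, ⁅(i : L), ⁅(j : L), x⁆⁆ = ⁅(j : L), ⁅(i : L), x⁆⁆ := by
      intro x
      rw [leibniz_lie, hij, zero_lie, zero_add]
    simp only [hF, LinearMap.comp_apply, adE_apply, hbr0]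
    exact Prod.ext (by simp [hcc]) (by simp [hcc])
  -- the complexification of U₂
  let W₂ : Submodule ℂ (L × L) :=
    { carrier := {p : L × L | p.1 ∈ U₂ ∧ p.2 ∈ U₂}
      add_mem' := fun {p q} hp hq => ⟨U₂.add_mem hp.1 hq.1, U₂.add_mem hp.2 hq.2⟩
      zero_mem' := ⟨U₂.zero_mem, U₂.zero_mem⟩
      smul_mem' := fun z p hp => ⟨U₂.sub_mem (U₂.smul_mem _ hp.1) (U₂.smul_mem _ hp.2),
        U₂.add_mem (U₂.smul_mem _ hp.1) (U₂.smul_mem _ hp.2)⟩ }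
  have hmemW₂ : ∀ p : L × L, p ∈ W₂ ↔ p.1 ∈ U₂ ∧ p.2 ∈ U₂ := fun p => Iff.rfl
  have hW₂ne : W₂ ≠ ⊥ := by
    obtain ⟨y, hyU, hy0⟩ := Submodule.exists_mem_ne_zero_of_ne_bot hU₂ne
    intro hbot
    have hmem : ((y, (0:L)) : L × L) ∈ W₂ := ⟨hyU, U₂.zero_mem⟩
    rw [hbot, Submodule.mem_bot] at hmem
    exact hy0 (congrArg Prod.fst hmem)
  have hW₂inv : ∀ i, ∀ w ∈ W₂, F i w ∈ W₂ := by
    intro i w hw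
    have hn := htn (i : L) i.2
    have hFi : F i w = (⁅(i : L), w.1⁆, ⁅(i : L), w.2⁆) := by
      rw [hF]; exact hbr0 _ w
    rw [hmemW₂, hFi]
    exact ⟨hU₂inv _ hn _ hw.1, hU₂inv _ hn _ hw.2⟩
  obtain ⟨v, hvW₂, hv0, hev⟩ :=
    exists_common_eigenvector F hcomm (Module.finrank ℂ W₂) W₂ rfl hW₂ne hW₂inv
  -- the weight α
  set α : L → ℂ := fun H => if hH : H ∈ 𝔱 then Classical.choose (hev ⟨H, hH⟩) else 0 with hαdef
  have hα : ∀ H : L, H ∈ 𝔱 → br ((H : L), (0:L)) v = α H • v := by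
    intro H hH
    have hspec := Classical.choose_spec (hev ⟨H, hH⟩)
    have : α H = Classical.choose (hev ⟨H, hH⟩) := by rw [hαdef]; simp [dif_pos hH]
    rw [this]
    exact hspec
  have hv1 : ∀ H : L, H ∈ 𝔱 → ⁅H, v.1⁆ = (α H).re • v.1 - (α H).im • v.2 := by
    intro H hH
    have h0 := hα H hH
    rw [hbr0] at h0
    have := congrArg Prod.fst h0
    simpa [csmul_fst] using this
  have hv2 : ∀ H : L, H ∈ 𝔱 → ⁅H, v.2⁆ = (α H).im • v.1 + (α H).re • v.2 := by
    intro H hH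
    have h0 := hα H hH
    rw [hbr0] at h0
    have := congrArg Prod.snd h0
    simpa [csmul_snd] using this
  -- pull back a weight vector into U₁
  have hvU1 : v.1 ∈ Submodule.map φ U₁ := by rw [hmap]; exact hvW₂.1
  have hvU2 : v.2 ∈ Submodule.map φ U₁ := by rw [hmap]; exact hvW₂.2
  obtain ⟨x₁, hx₁, hφ1⟩ := Submodule.mem_map.mp hvU1
  obtain ⟨x₂, hx₂, hφ2⟩ := Submodule.mem_map.mp hvU2
  set u : L × L := (x₁, x₂) with hudef
  have hu0 : u ≠ 0 := by
    intro hz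
    apply hv0
    have e1 : x₁ = 0 := congrArg Prod.fst hz
    have e2 : x₂ = 0 := congrArg Prod.snd hz
    have : v = ((φ x₁ : L), (φ x₂ : L)) := by
      rw [hφ1, hφ2]
    rw [this, e1, e2, map_zero]
    rfl
  have huα : ∀ H : L, H ∈ 𝔱 → br ((H : L), (0:L)) u = α H • u := by
    intro H hH
    have hHn := htn H hH
    have k1 : ⁅H, x₁⁆ = (α H).re • x₁ - (α H).im • x₂ := by
      have hd : ⁅H, x₁⁆ - ((α H).re • x₁ - (α H).im • x₂) ∈ U₁ :=
        U₁.sub_mem (hU₁inv H hHn x₁ hx₁)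
          (U₁.sub_mem (U₁.smul_mem _ hx₁) (U₁.smul_mem _ hx₂))
      have hφd : φ (⁅H, x₁⁆ - ((α H).re • x₁ - (α H).im • x₂)) = 0 := by
        rw [map_sub, map_sub, map_smul, map_smul, hequiv H hHn x₁ hx₁, hφ1, hφ2,
          hv1 H hH]
        abel
      exact sub_eq_zero.mp (hinj _ hd hφd)
    have k2 : ⁅H, x₂⁆ = (α H).im • x₁ + (α H).re • x₂ := by
      have hd : ⁅H, x₂⁆ - ((α H).im • x₁ + (α H).re • x₂) ∈ U₁ :=
        U₁.sub_mem (hU₁inv H hHn x₂ hx₂)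
          (U₁.add_mem (U₁.smul_mem _ hx₁) (U₁.smul_mem _ hx₂))
      have hφd : φ (⁅H, x₂⁆ - ((α H).im • x₁ + (α H).re • x₂)) = 0 := by
        rw [map_sub, map_add, map_smul, map_smul, hequiv H hHn x₂ hx₂, hφ1, hφ2,
          hv2 H hH]
        abel
      exact sub_eq_zero.mp (hinj _ hd hφd)
    rw [hbr0, hudef]
    exact Prod.ext (by rw [csmul_fst]; exact k1) (by rw [csmul_snd]; exact k2)
  -- positivity of norms
  have hvne : 0 < Q v.1 v.1 + Q v.2 v.2 := by
    have hor : v.1 ≠ 0 ∨ v.2 ≠ 0 := by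
      by_contra hc
      push_neg at hc
      exact hv0 (Prod.ext hc.1 hc.2)
    rcases hor with hne | hne
    · have := hQpos v.1 hne; have := hQnn v.2; linarith
    · have := hQpos v.2 hne; have := hQnn v.1; linarith
  have hune : 0 < Q x₁ x₁ + Q x₂ x₂ := by
    have hor : x₁ ≠ 0 ∨ x₂ ≠ 0 := by
      by_contra hc
      push_neg at hc
      exact hu0 (by rw [hudef, hc.1, hc.2]; rfl)
    rcases hor with hne | hne
    · have := hQpos x₁ hne; have := hQnn x₂; linarith
    · have := hQpos x₂ hne; have := hQnn x₁; linarith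
  -- the weight is purely imaginary
  have himg : ∀ H : L, H ∈ 𝔱 → (α H).re = 0 := by
    intro H hH
    have q1 : Q ⁅H, v.1⁆ v.1 = -(Q v.1 ⁅H, v.1⁆) := hQad H v.1 v.1
    have q2 : Q ⁅H, v.2⁆ v.2 = -(Q v.2 ⁅H, v.2⁆) := hQad H v.2 v.2
    rw [hv1 H hH] at q1
    rw [hv2 H hH] at q2
    simp only [map_sub, map_add, map_smul, LinearMap.sub_apply, LinearMap.add_apply,
      LinearMap.smul_apply, smul_eq_mul] at q1 q2
    have key : (α H).re * (Q v.1 v.1 + Q v.2 v.2) = 0 := by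
      linear_combination q1 / 2 + q2 / 2
    exact (mul_eq_zero.mp key).resolve_right (ne_of_gt hvne)
  by_cases hall : ∀ H : L, H ∈ 𝔱 → α H = 0
  · -- zero weight: v would lie in 𝔱ᶜ ⊆ nᶜ, contradicting v ∈ 𝔭ᶜ
    apply hv0
    have c1 : v.1 ∈ 𝔱 := hcent v.1 fun H hH => by
      rw [hv1 H hH, hall H hH]; simp
    have c2 : v.2 ∈ 𝔱 := hcent v.2 fun H hH => by
      rw [hv2 H hH, hall H hH]; simp
    have p1 : v.1 = 0 := hQz v.1 ((h𝔭 v.1).mp (hU₂p hvW₂.1) v.1 (htn v.1 c1))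
    have p2 : v.2 = 0 := hQz v.2 ((h𝔭 v.2).mp (hU₂p hvW₂.2) v.2 (htn v.2 c2))
    exact Prod.ext p1 p2
  · push_neg at hall
    obtain ⟨H₀, hH₀, hα₀⟩ := hall
    -- conjugate vector f and the element h = [u, f]
    set f : L × L := cj u with hfdef
    have hconj : ∀ H : L, H ∈ 𝔱 → (starRingEnd ℂ) (α H) = -α H := by
      intro H hH
      apply Complex.ext <;> simp [himg H hH]
    have hfα : ∀ H : L, H ∈ 𝔱 → br ((H : L), (0:L)) f = (-α H) • f := by
      intro H hH
      have hc : cj (br ((H : L), (0:L)) u) = br (cj ((H : L), (0:L))) (cj u) := cj_br _ _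
      rw [huα H hH, cj_smul, hconj H hH] at hc
      have hfix : cj ((H : L), (0:L)) = ((H : L), (0:L)) := by simp [cj]
      rw [hfix] at hc
      rw [← hfdef] at hc
      exact hc.symm
    set h : L × L := br u f with hhdef
    have hzero1 : ∀ p : L × L, (∀ H : L, H ∈ 𝔱 → br ((H : L), (0:L)) p = 0) → p.1 ∈ 𝔱 := by
      intro p hp
      apply hcent
      intro H hH
      have hq := hp H hH
      rw [hbr0] at hq
      simpa using congrArg Prod.fst hq
    have hzero2 : ∀ p : L × L, (∀ H : L, H ∈ 𝔱 → br ((H : L), (0:L)) p = 0) → p.2 ∈ 𝔱 := by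
      intro p hp
      apply hcent
      intro H hH
      have hq := hp H hH
      rw [hbr0] at hq
      simpa using congrArg Prod.snd hq
    have hh0 : ∀ H : L, H ∈ 𝔱 → br ((H : L), (0:L)) h = 0 := by
      intro H hH
      rw [hhdef, br_jacobi, huα H hH, hfα H hH, br_smul_left, br_smul_right, neg_smul]
      abel
    have hth1 : h.1 ∈ 𝔱 := hzero1 h hh0
    have hth2 : h.2 ∈ 𝔱 := hzero2 h hh0
    -- the key inner product computation
    have hNr : Qc Q f u = ((Q x₁ x₁ + Q x₂ x₂ : ℝ) : ℂ) := Qc_cj_self Q hQsymm u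
    have hQch : ∀ H : L, H ∈ 𝔱 → Qc Q h ((H : L), (0:L)) = α H * ((Q x₁ x₁ + Q x₂ x₂ : ℝ) : ℂ) := by
      intro H hH
      rw [hhdef, Qc_invariant Q hQad u f ((H : L), (0:L))]
      have hb : br u ((H : L), (0:L)) = (-α H) • u := by
        rw [br_antisymm, huα H hH, ← neg_smul]
      rw [hb, Qc_smul_right, hNr]
      ring
    have hQh1 : ∀ H : L, H ∈ 𝔱 → Q h.1 H = 0 := by
      intro H hH
      have hre := congrArg Complex.re (hQch H hH)
      rw [Qc_re] at hre
      simpa [Complex.mul_re, himg H hH] using hre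
    have hQh2 : ∀ H : L, H ∈ 𝔱 → Q h.2 H = (α H).im * (Q x₁ x₁ + Q x₂ x₂) := by
      intro H hH
      have him := congrArg Complex.im (hQch H hH)
      rw [Qc_im] at him
      simpa [Complex.mul_im, himg H hH] using him
    have hh1 : h.1 = 0 := hQz _ (hQh1 h.1 hth1)
    have hα₀im : (α H₀).im ≠ 0 := by
      intro hzero
      exact hα₀ (Complex.ext (himg H₀ hH₀) hzero)
    have hh2ne : h.2 ≠ 0 := by
      intro hz
      have hq := hQh2 H₀ hH₀
      rw [hz] at hq
      simp only [map_zero, LinearMap.zero_apply] at hq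
      rcases mul_eq_zero.mp hq.symm with hc | hc
      · exact hα₀im hc
      · exact (ne_of_gt hune) hc
    have him2 : (α h.2).im ≠ 0 := by
      intro hz
      have hq := hQh2 h.2 hth2
      rw [hz, zero_mul] at hq
      exact hh2ne (hQz _ hq)
    set c : ℂ := Complex.I * α h.2 with hcdef
    have hc0 : c ≠ 0 := by
      rw [hcdef]
      apply mul_ne_zero Complex.I_ne_zero
      intro hz
      exact him2 (by rw [hz]; rfl)
    have hhI : h = Complex.I • ((h.2, (0:L)) : L × L) := by
      apply Prod.ext
      · rw [csmul_fst]; simp [hh1]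
      · rw [csmul_snd]; simp
    have hhweight : ∀ p : L × L, br ((h.2 : L), (0:L)) p = α h.2 • p → br h p = c • p := by
      intro p hp
      calc br h p = br (Complex.I • ((h.2, (0:L)) : L × L)) p := by rw [← hhI]
        _ = Complex.I • br ((h.2, (0:L)) : L × L) p := br_smul_left _ _ _
        _ = Complex.I • (α h.2 • p) := by rw [hp]
        _ = c • p := by rw [smul_smul, ← hcdef]
    have hbh_e : br h u = c • u := hhweight u (huα h.2 hth2)
    have hbh_v : br h v = c • v := hhweight v (hα h.2 hth2)
    -- f kills v
    have hfv : br f v = 0 := by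
      set w : L × L := br f v with hwdef
      have hw𝔱 : ∀ H : L, H ∈ 𝔱 → br ((H : L), (0:L)) w = 0 := by
        intro H hH
        rw [hwdef, br_jacobi, hfα H hH, hα H hH, br_smul_left, br_smul_right, neg_smul]
        abel
      have hQvf : Qc Q v f = 0 := by
        have o1 : Q v.1 x₁ = 0 := (h𝔭 v.1).mp (hU₂p hvW₂.1) x₁ (hkn x₁ (hU₁k hx₁))
        have o2 : Q v.1 x₂ = 0 := (h𝔭 v.1).mp (hU₂p hvW₂.1) x₂ (hkn x₂ (hU₁k hx₂))
        have o3 : Q v.2 x₁ = 0 := (h𝔭 v.2).mp (hU₂p hvW₂.2) x₁ (hkn x₁ (hU₁k hx₁))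
        have o4 : Q v.2 x₂ = 0 := (h𝔭 v.2).mp (hU₂p hvW₂.2) x₂ (hkn x₂ (hU₁k hx₂))
        apply Complex.ext
        · rw [Qc_re]
          simp [hfdef, cj, hudef, o1, o4]
        · rw [Qc_im]
          simp [hfdef, cj, hudef, o2, o3]
      have hQw : ∀ H : L, H ∈ 𝔱 → Qc Q w ((H : L), (0:L)) = 0 := by
        intro H hH
        rw [hwdef, Qc_invariant Q hQad f v ((H : L), (0:L))]
        have hb : br f ((H : L), (0:L)) = α H • f := by
          rw [br_antisymm, hfα H hH, neg_smul, neg_neg]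
        rw [hb, Qc_smul_right, hQvf, mul_zero, neg_zero]
      have hw1 : w.1 ∈ 𝔱 := hzero1 w hw𝔱
      have hw2 : w.2 ∈ 𝔱 := hzero2 w hw𝔱
      have e1 : w.1 = 0 := by
        apply hQz
        have := congrArg Complex.re (hQw w.1 hw1)
        rw [Qc_re] at this
        simpa using this
      have e2 : w.2 = 0 := by
        apply hQz
        have := congrArg Complex.im (hQw w.2 hw2)
        rw [Qc_im] at this
        simpa using this
      exact Prod.ext e1 e2
    -- the sl2 string
    set vk : ℕ → L × L := fun k => (fun p => br u p)^[k] v with hvkdef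
    have hvk0 : vk 0 = v := rfl
    have hvks : ∀ k, vk (k + 1) = br u (vk k) := by
      intro k
      rw [hvkdef]
      exact Function.iterate_succ_apply' _ k v
    have hfu : br f u = -h := by rw [br_antisymm, hhdef]
    have hA : ∀ k, br h (vk k) = (((k : ℂ) + 1) * c) • vk k := by
      intro k
      induction k with
      | zero =>
        rw [hvk0, hbh_v]
        norm_num
      | succ k ih =>
        rw [hvks k, br_jacobi, hbh_e, ih, br_smul_left, br_smul_right, ← hvks k,
          ← add_smul]
        congr 1
        push_cast
        ring
    have hB : ∀ k, br f (vk (k + 1)) = (-(((k : ℂ) + 1) * ((k : ℂ) + 2) / 2) * c) • vk k := by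
      intro k
      induction k with
      | zero =>
        rw [hvks 0, hvk0, br_jacobi, hfu, br_neg_left, hbh_v, hfv, br_zero_right, add_zero,
          ← neg_smul]
        congr 1
        norm_num
      | succ k ih =>
        rw [hvks (k + 1), br_jacobi, hfu, br_neg_left, hA (k + 1), ih, br_smul_right,
          ← hvks k, ← neg_smul, ← add_smul]
        congr 1
        push_cast
        ring
    have hexist : ∃ k, vk k = 0 := by
      by_contra hno
      push_neg at hno
      have hev' : ∀ k : ℕ, (adE h).HasEigenvector (((k : ℂ) + 1) * c) (vk k) := by
        intro k
        rw [Module.End.hasEigenvector_iff]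
        exact ⟨Module.End.mem_eigenspace_iff.mpr (hA k), hno k⟩
      have hinjμ : Function.Injective fun k : ℕ => ((k : ℂ) + 1) * c := by
        intro a b hab
        simp only at hab
        have h1 := mul_right_cancel₀ hc0 hab
        have h2 : (a : ℂ) = (b : ℂ) := by linear_combination h1
        exact_mod_cast h2
      have hli := (adE h).eigenvectors_linearIndependent' _ hinjμ vk hev'
      have hli2 := hli.comp (fun i : Fin (Module.finrank ℂ (L × L) + 1) => (i : ℕ))
        (fun a b hab => Fin.val_injective hab)
      have hcard := hli2.fintype_card_le_finrank
      simp only [Fintype.card_fin] at hcard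
      omega
    obtain ⟨m, hm0, hmmin⟩ : ∃ m, vk m = 0 ∧ ∀ l, l < m → vk l ≠ 0 :=
      ⟨Nat.find hexist, Nat.find_spec hexist, fun l hl => Nat.find_min hexist hl⟩
    cases m with
    | zero => exact hv0 (by rw [← hvk0]; exact hm0)
    | succ m =>
      have hbm := hB m
      rw [hm0, br_zero_right] at hbm
      have hν : (-(((m : ℂ) + 1) * ((m : ℂ) + 2) / 2) * c) ≠ 0 := by
        apply mul_ne_zero _ hc0
        rw [neg_ne_zero, div_ne_zero_iff]
        refine ⟨mul_ne_zero (Nat.cast_add_one_ne_zero m) ?_, two_ne_zero⟩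
        have : ((m : ℂ) + 2) = (((m + 1 : ℕ) : ℂ) + 1) := by push_cast; ring
        rw [this]
        exact Nat.cast_add_one_ne_zero (m + 1)
      have hzz := (smul_eq_zero.mp hbm.symm).resolve_left hν
      exact hmmin m (Nat.lt_succ_self m) hzz
end

section
/- Let 𝔤 be a compact Lie algebra with regular subalgebra 𝔨, normalizer n = n_𝔤(𝔨), and Q-orthogonal complement 𝔭 of n in 𝔤. If φ: 𝔫' → 𝔮 is an ad_n-equivariant isomorphism from a submodule 𝔫' ⊆ 𝔨 onto a submodule 𝔮 ⊆ 𝔭, and X ∈ 𝔫' lies in a Cartan subalgebra 𝔱 of 𝔤 contained in n, then φ(X) = 0; hence 𝔫' = {0}. -/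
theorem stmt7_aux {L : Type*} [LieRing L] [LieAlgebra ℝ L]
    (Q : L →ₗ[ℝ] L →ₗ[ℝ] ℝ)
    (hQpos : ∀ x : L, x ≠ 0 → 0 < Q x x)
    (𝔨 : LieSubalgebra ℝ L)
    (𝔭 : Submodule ℝ L)
    (h𝔭 : ∀ X : L, X ∈ 𝔭 ↔ ∀ Y ∈ 𝔨.normalizer, Q X Y = 0)
    (𝔫' 𝔮 : Submodule ℝ L)
    (h𝔮p : 𝔮 ≤ 𝔭)
    (φ : L →ₗ[ℝ] L)
    (hφmap : Submodule.map φ 𝔫' = 𝔮)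
    (hφequiv : ∀ X ∈ 𝔨.normalizer, ∀ u ∈ 𝔫', φ ⁅X, u⁆ = ⁅X, φ u⁆)
    (𝔱' : LieSubalgebra ℝ L)
    (hab : ∀ A ∈ 𝔱', ∀ B ∈ 𝔱', ⁅A, B⁆ = 0)
    (hmax : ∀ 𝔱'' : LieSubalgebra ℝ L, (∀ A ∈ 𝔱'', ∀ B ∈ 𝔱'', ⁅A, B⁆ = 0) → 𝔱' ≤ 𝔱'' → 𝔱'' = 𝔱')
    (hle : 𝔱' ≤ 𝔨.normalizer)
    (Y : L) (hY : Y ∈ 𝔫') (hYt : Y ∈ 𝔱') : φ Y = 0 := by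
  set Z := φ Y with hZ
  have hZ𝔮 : Z ∈ 𝔮 := hφmap ▸ Submodule.mem_map_of_mem hY
  -- key: Z commutes with everything in 𝔱'
  have key : ∀ H ∈ 𝔱', ⁅H, Z⁆ = 0 := by
    intro H hH
    rw [hZ, ← hφequiv H (hle hH) Y hY, hab H hH Y hYt, map_zero]
  -- the submodule spanned by 𝔱' and Z
  set S : Submodule ℝ L := 𝔱'.toSubmodule ⊔ (ℝ ∙ Z) with hS
  have hmem : ∀ x ∈ S, ∃ a, a ∈ 𝔱' ∧ ∃ c : ℝ, x = a + c • Z := by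
    intro x hx
    rcases Submodule.mem_sup.mp hx with ⟨a, ha, z, hz, rfl⟩
    rcases Submodule.mem_span_singleton.mp hz with ⟨c, rfl⟩
    exact ⟨a, ha, c, rfl⟩
  have hbrk : ∀ x ∈ S, ∀ y ∈ S, ⁅x, y⁆ = 0 := by
    intro x hx y hy
    obtain ⟨a, ha, c, rfl⟩ := hmem x hx
    obtain ⟨b, hb, d, rfl⟩ := hmem y hy
    have h1 : ⁅a, b⁆ = 0 := hab a ha b hb
    have h2 : ⁅a, Z⁆ = 0 := key a ha
    have h3 : ⁅Z, b⁆ = 0 := by rw [← lie_skew, key b hb, neg_zero]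
    simp [lie_add, add_lie, lie_smul, smul_lie, h1, h2, h3]
  let 𝔱'' : LieSubalgebra ℝ L :=
    { S with
      lie_mem' := fun {x y} hx hy => by
        rw [hbrk x hx y hy]
        exact S.zero_mem }
  have hSle : 𝔱' ≤ 𝔱'' := fun x hx =>
    Submodule.mem_sup_left (by exact hx)
  have heq : 𝔱'' = 𝔱' := hmax 𝔱'' hbrk hSle
  have hZt : Z ∈ 𝔱' := by
    rw [← heq]
    exact Submodule.mem_sup_right (Submodule.mem_span_singleton_self Z)
  have hQZZ : Q Z Z = 0 := (h𝔭 Z).mp (h𝔮p hZ𝔮) Z (hle hZt)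
  by_contra h
  exact absurd hQZZ (ne_of_gt (hQpos Z h))



/-- If `φ : 𝔫' → 𝔮` is an `ad_n`-equivariant isomorphism from an `ad_n`-submodule
`𝔫' ⊆ 𝔨` onto an `ad_n`-submodule `𝔮 ⊆ 𝔭`, where `𝔨` is a regular subalgebra of the
compact Lie algebra `𝔤` (normalized by the Cartan subalgebra `𝔱 ⊆ n = n_𝔤(𝔨)`),
and `X ∈ 𝔫'` lies in `𝔱`, then `φ X = 0`; hence (as every element of `𝔫'` lies in
some Cartan subalgebra of `𝔤` contained in `n`) `𝔫' = 0`. -/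
theorem stmt7 {L : Type*} [LieRing L] [LieAlgebra ℝ L] [FiniteDimensional ℝ L]
    (Q : L →ₗ[ℝ] L →ₗ[ℝ] ℝ)
    (hQsymm : ∀ x y : L, Q x y = Q y x)
    (hQpos : ∀ x : L, x ≠ 0 → 0 < Q x x)
    (hQad : ∀ X Y Z : L, Q ⁅X, Y⁆ Z = -(Q Y ⁅X, Z⁆))
    (𝔨 𝔱 : LieSubalgebra ℝ L)
    -- 𝔱 is a Cartan (maximal abelian) subalgebra of 𝔤 normalizing 𝔨
    (htab : ∀ X ∈ 𝔱, ∀ Y ∈ 𝔱, ⁅X, Y⁆ = 0)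
    (htmax : ∀ 𝔱' : LieSubalgebra ℝ L, (∀ X ∈ 𝔱', ∀ Y ∈ 𝔱', ⁅X, Y⁆ = 0) → 𝔱 ≤ 𝔱' → 𝔱' = 𝔱)
    (hreg : ∀ H ∈ 𝔱, ∀ X ∈ 𝔨, ⁅H, X⁆ ∈ 𝔨)
    (𝔭 : Submodule ℝ L)
    (h𝔭 : ∀ X : L, X ∈ 𝔭 ↔ ∀ Y ∈ 𝔨.normalizer, Q X Y = 0)
    (𝔫' 𝔮 : Submodule ℝ L)
    (h𝔫'k : 𝔫' ≤ 𝔨.toSubmodule) (h𝔮p : 𝔮 ≤ 𝔭)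
    (h𝔫'inv : ∀ X ∈ 𝔨.normalizer, ∀ u ∈ 𝔫', ⁅X, u⁆ ∈ 𝔫')
    (h𝔮inv : ∀ X ∈ 𝔨.normalizer, ∀ u ∈ 𝔮, ⁅X, u⁆ ∈ 𝔮)
    (φ : L →ₗ[ℝ] L)
    (hφmap : Submodule.map φ 𝔫' = 𝔮)
    (hφinj : ∀ x ∈ 𝔫', φ x = 0 → x = 0)
    (hφequiv : ∀ X ∈ 𝔨.normalizer, ∀ u ∈ 𝔫', φ ⁅X, u⁆ = ⁅X, φ u⁆)
    -- every element of 𝔫' lies in some Cartan subalgebra of 𝔤 contained in n_𝔤(𝔨)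
    (hcover : ∀ Y ∈ 𝔫', ∃ 𝔱' : LieSubalgebra ℝ L,
      (∀ A ∈ 𝔱', ∀ B ∈ 𝔱', ⁅A, B⁆ = 0) ∧
      (∀ 𝔱'' : LieSubalgebra ℝ L, (∀ A ∈ 𝔱'', ∀ B ∈ 𝔱'', ⁅A, B⁆ = 0) → 𝔱' ≤ 𝔱'' → 𝔱'' = 𝔱') ∧
      𝔱' ≤ 𝔨.normalizer ∧ Y ∈ 𝔱')
    (X : L) (hX𝔫' : X ∈ 𝔫') (hX𝔱 : X ∈ 𝔱) :
    φ X = 0 ∧ 𝔫' = ⊥ := by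
  have ht_le : 𝔱 ≤ 𝔨.normalizer := by
    intro H hH
    rw [LieSubalgebra.mem_normalizer_iff]
    exact fun x hx => hreg H hH x hx
  have main : ∀ Y ∈ 𝔫', φ Y = 0 := by
    intro Y hY
    obtain ⟨𝔱', hab, hmax, hle, hYt⟩ := hcover Y hY
    exact stmt7_aux Q hQpos 𝔨 𝔭 h𝔭 𝔫' 𝔮 h𝔮p φ hφmap hφequiv 𝔱' hab hmax hle Y hY hYt
  refine ⟨main X hX𝔫', ?_⟩
  rw [eq_bot_iff]
  intro Y hY
  rw [Submodule.mem_bot]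
  exact hφinj Y hY (main Y hY)
end

section
/- Let 𝔤 be a compact Lie algebra with ad-invariant inner product Q, 𝔨 a subalgebra with orthogonal complement 𝔪. Suppose every irreducible non-zero ad_𝔨-submodule of 𝔨 is ad_𝔨-inequivalent to every irreducible non-zero ad_𝔨-submodule of 𝔪. Then every non-zero ad_n-submodule of 𝔨 is ad_n-inequivalent to every non-zero ad_n-submodule of 𝔭, where n = n_𝔤(𝔨) and 𝔭 is the orthogonal complement of n in 𝔤 (i.e. 𝔨 is weakly regular). -/
/-- Every non-zero invariant submodule contains a non-zero irreducible invariant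
submodule (finite dimension). -/
lemma exists_irred_aux {L : Type*} [LieRing L] [LieAlgebra ℝ L] [FiniteDimensional ℝ L]
    (𝔨 : LieSubalgebra ℝ L) :
    ∀ n : ℕ, ∀ U : Submodule ℝ L, Module.finrank ℝ U ≤ n → U ≠ ⊥ →
      (∀ X ∈ 𝔨, ∀ u ∈ U, ⁅X, u⁆ ∈ U) →
      ∃ V : Submodule ℝ L, V ≤ U ∧ V ≠ ⊥ ∧ (∀ X ∈ 𝔨, ∀ u ∈ V, ⁅X, u⁆ ∈ V) ∧
        (∀ W : Submodule ℝ L, W ≤ V → (∀ X ∈ 𝔨, ∀ u ∈ W, ⁅X, u⁆ ∈ W) → W = ⊥ ∨ W = V) := by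
  intro n
  induction n with
  | zero =>
    intro U hrank hne _
    exact absurd (Submodule.finrank_eq_zero.mp (Nat.le_zero.mp hrank)) hne
  | succ n ih =>
    intro U hrank hne hinv
    by_cases hU : ∀ W : Submodule ℝ L, W ≤ U → (∀ X ∈ 𝔨, ∀ u ∈ W, ⁅X, u⁆ ∈ W) → W = ⊥ ∨ W = U
    · exact ⟨U, le_rfl, hne, hinv, hU⟩
    · push_neg at hU
      obtain ⟨W, hWU, hWinv, hWbot, hWne⟩ := hU
      have hlt : W < U := lt_of_le_of_ne hWU hWne
      have : Module.finrank ℝ W < Module.finrank ℝ U := Submodule.finrank_lt_finrank_of_lt hlt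
      obtain ⟨V, hVW, hV⟩ := ih W (by omega) hWbot hWinv
      exact ⟨V, hVW.trans hWU, hV⟩

/-- Criterion for weak regularity: if every irreducible non-zero `ad_𝔨`-submodule of
`𝔨` is `ad_𝔨`-inequivalent to every irreducible non-zero `ad_𝔨`-submodule of the
`Q`-orthogonal complement `𝔪`, then `𝔨` is weakly regular: every non-zero
`ad_n`-submodule of `𝔨` is `ad_n`-inequivalent to every non-zero `ad_n`-submodule of
`𝔭`, where `n = n_𝔤(𝔨)` and `𝔭` is the `Q`-orthogonal complement of `n`. -/
theorem stmt8 {L : Type*} [LieRing L] [LieAlgebra ℝ L] [FiniteDimensional ℝ L]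
    (Q : L →ₗ[ℝ] L →ₗ[ℝ] ℝ)
    (hQsymm : ∀ x y : L, Q x y = Q y x)
    (hQpos : ∀ x : L, x ≠ 0 → 0 < Q x x)
    (hQad : ∀ X Y Z : L, Q ⁅X, Y⁆ Z = -(Q Y ⁅X, Z⁆))
    (𝔨 : LieSubalgebra ℝ L)
    (𝔪 𝔭 : Submodule ℝ L)
    (h𝔪 : ∀ X : L, X ∈ 𝔪 ↔ ∀ Y ∈ 𝔨, Q X Y = 0)
    (h𝔭 : ∀ X : L, X ∈ 𝔭 ↔ ∀ Y ∈ 𝔨.normalizer, Q X Y = 0)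
    -- irreducible non-zero ad_𝔨-submodules of 𝔨 and of 𝔪 are pairwise inequivalent
    (hirr : ∀ U₁ U₂ : Submodule ℝ L, U₁ ≤ 𝔨.toSubmodule → U₂ ≤ 𝔪 → U₁ ≠ ⊥ → U₂ ≠ ⊥ →
      (∀ X ∈ 𝔨, ∀ u ∈ U₁, ⁅X, u⁆ ∈ U₁) → (∀ X ∈ 𝔨, ∀ u ∈ U₂, ⁅X, u⁆ ∈ U₂) →
      (∀ U : Submodule ℝ L, U ≤ U₁ → (∀ X ∈ 𝔨, ∀ u ∈ U, ⁅X, u⁆ ∈ U) → U = ⊥ ∨ U = U₁) →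
      (∀ U : Submodule ℝ L, U ≤ U₂ → (∀ X ∈ 𝔨, ∀ u ∈ U, ⁅X, u⁆ ∈ U) → U = ⊥ ∨ U = U₂) →
      ¬ ∃ φ : L →ₗ[ℝ] L, Submodule.map φ U₁ = U₂ ∧ (∀ x ∈ U₁, φ x = 0 → x = 0) ∧
        (∀ X ∈ 𝔨, ∀ u ∈ U₁, φ ⁅X, u⁆ = ⁅X, φ u⁆)) :
    -- conclusion: 𝔨 is weakly regular
    ∀ U₁ U₂ : Submodule ℝ L, U₁ ≤ 𝔨.toSubmodule → U₂ ≤ 𝔭 → U₁ ≠ ⊥ → U₂ ≠ ⊥ →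
      (∀ X ∈ 𝔨.normalizer, ∀ u ∈ U₁, ⁅X, u⁆ ∈ U₁) →
      (∀ X ∈ 𝔨.normalizer, ∀ u ∈ U₂, ⁅X, u⁆ ∈ U₂) →
      ¬ ∃ φ : L →ₗ[ℝ] L, Submodule.map φ U₁ = U₂ ∧ (∀ x ∈ U₁, φ x = 0 → x = 0) ∧
        (∀ X ∈ 𝔨.normalizer, ∀ u ∈ U₁, φ ⁅X, u⁆ = ⁅X, φ u⁆) := by
  intro U₁ U₂ hU₁𝔨 hU₂𝔭 hU₁ne hU₂ne h1inv h2inv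
  rintro ⟨φ, hmap, hinj, hequiv⟩
  -- membership in 𝔨 implies membership in the normalizer
  have hkn : ∀ X : L, X ∈ 𝔨 → X ∈ 𝔨.normalizer := fun X hX => 𝔨.le_normalizer hX
  -- 𝔭 ≤ 𝔪
  have h𝔭𝔪 : 𝔭 ≤ 𝔪 := by
    intro x hx
    rw [h𝔪]
    intro Y hY
    exact (h𝔭 x).mp hx Y (hkn Y hY)
  -- U₁ is ad_𝔨-invariant
  have h1inv' : ∀ X ∈ 𝔨, ∀ u ∈ U₁, ⁅X, u⁆ ∈ U₁ := fun X hX => h1inv X (hkn X hX)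
  -- take an irreducible invariant non-zero submodule V ≤ U₁
  obtain ⟨V, hVU₁, hVne, hVinv, hVirr⟩ :=
    exists_irred_aux 𝔨 (Module.finrank ℝ U₁) U₁ le_rfl hU₁ne h1inv'
  -- its image under φ
  set W : Submodule ℝ L := Submodule.map φ V with hWdef
  have hVU₁' : ∀ x ∈ V, x ∈ U₁ := fun x hx => hVU₁ hx
  have hWU₂ : W ≤ U₂ := hmap ▸ Submodule.map_mono hVU₁
  have hWne : W ≠ ⊥ := by
    intro hW
    apply hVne
    rw [Submodule.eq_bot_iff]
    intro v hv
    have : φ v = 0 := by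
      have : φ v ∈ W := Submodule.mem_map_of_mem hv
      rw [hW] at this
      simpa using this
    exact hinj v (hVU₁' v hv) this
  have hWinv : ∀ X ∈ 𝔨, ∀ u ∈ W, ⁅X, u⁆ ∈ W := by
    rintro X hX u ⟨v, hv, rfl⟩
    exact ⟨⁅X, v⁆, hVinv X hX v hv, (hequiv X (hkn X hX) v (hVU₁' v hv))⟩
  have hW𝔪 : W ≤ 𝔪 := le_trans hWU₂ (le_trans hU₂𝔭 h𝔭𝔪)
  -- W is irreducible
  have hWirr : ∀ T : Submodule ℝ L, T ≤ W → (∀ X ∈ 𝔨, ∀ u ∈ T, ⁅X, u⁆ ∈ T) →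
      T = ⊥ ∨ T = W := by
    intro T hTW hTinv
    have := hVirr (V ⊓ Submodule.comap φ T)
      inf_le_left
      (by
        intro X hX u hu
        refine ⟨hVinv X hX u hu.1, ?_⟩
        refine Submodule.mem_comap.mpr ?_
        rw [hequiv X (hkn X hX) u (hVU₁' u hu.1)]
        exact hTinv X hX (φ u) hu.2)
    rcases this with h | h
    · left
      rw [Submodule.eq_bot_iff]
      intro t ht
      obtain ⟨v, hv, rfl⟩ := hTW ht
      have hvT : v ∈ V ⊓ Submodule.comap φ T := ⟨hv, ht⟩
      rw [h] at hvT
      simp only [Submodule.mem_bot] at hvT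
      rw [hvT]; simp
    · right
      refine le_antisymm hTW ?_
      rintro w ⟨v, hv, rfl⟩
      exact (le_trans h.ge inf_le_right) hv
  -- apply the hypothesis
  refine hirr V W (le_trans hVU₁ hU₁𝔨) hW𝔪 hVne hWne hVinv hWinv hVirr hWirr ?_
  exact ⟨φ, rfl, fun x hx => hinj x (hVU₁' x hx),
    fun X hX u hu => hequiv X (hkn X hX) u (hVU₁' u hu)⟩
end
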